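/- (Main theorem) Let K ≥ 2, μ, ν ∈ (0,1), and let π ∈ ℝ^K be a probability vector with all entries positive. Let T be the RTL transition matrix and Δ = [1, 1/2, …, 1/K]ᵀ the MRR vector. If μ < (π_{i+1}/π_i)·ν for all 1 ≤ i ≤ K−1, then the expected-MRR gain G = π·(T − I)·Δᵀ is strictly positive. -/

import Mathlib

open Matrix

/-- The RTL transition matrix on `Fin K` (position `i : Fin K` corresponds to rank `i+1`). -/
noncomputable def rtlT (K : ℕ) (μ ν : ℝ) : Matrix (Fin K) (Fin K) ℝ :=
  Matrix.of fun i j =>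
    if i.val + 1 < K then
      if j.val = i.val + 1 then μ
      else if 0 < j.val ∧ j.val ≤ i.val then (1 - μ) * (1 - ν) * ν ^ (i.val - j.val)
      else if j.val = 0 then (1 - μ) * ν ^ i.val
      else 0
    else
      if j.val = 0 then ν ^ (K - 1)
      else (1 - ν) * ν ^ (K - 1 - j.val)

/-- The MRR metric vector `Δ_k = 1/k` (rank `k = i+1` for `i : Fin K`). -/
noncomputable def mrr (K : ℕ) : Fin K → ℝ := fun i => 1 / ((i.val : ℝ) + 1)

namespace RtlAux

open Finset

/-- Nat-indexed version of the RTL matrix entries. -/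
noncomputable def tAux (K : ℕ) (μ ν : ℝ) : ℕ → ℕ → ℝ := fun i j =>
  if i + 1 < K then
    if j = i + 1 then μ
    else if 0 < j ∧ j ≤ i then (1 - μ) * (1 - ν) * ν ^ (i - j)
    else if j = 0 then (1 - μ) * ν ^ i
    else 0
  else
    if j = 0 then ν ^ (K - 1)
    else (1 - ν) * ν ^ (K - 1 - j)

/-- Nat-indexed MRR values. -/
noncomputable def dAux : ℕ → ℝ := fun n => 1 / ((n : ℝ) + 1)

lemma geo_aux (μ : ℝ) (r : ℕ) : (1 - μ) * ∑ k ∈ range r, μ ^ (k + 1) = μ - μ ^ (r + 1) := by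
  induction r with
  | zero => simp
  | succ r ih => rw [Finset.sum_range_succ, mul_add, ih]; ring

lemma tri_aux (n : ℕ) (f : ℕ → ℕ → ℝ) :
    ∑ i ∈ range n, ∑ j ∈ range i, f i j = ∑ j ∈ range n, ∑ i ∈ Ico (j + 1) n, f i j := by
  induction n with
  | zero => simp
  | succ n ih =>
    rw [Finset.sum_range_succ, ih,
      Finset.sum_range_succ (f := fun j => ∑ i ∈ Ico (j + 1) (n + 1), f i j)]
    rw [Finset.Ico_self, Finset.sum_empty, add_zero, ← Finset.sum_add_distrib]
    refine Finset.sum_congr rfl fun j hj => ?_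
    have hj' : j < n := Finset.mem_range.1 hj
    rw [Finset.sum_Ico_succ_top (by omega : j + 1 ≤ n)]

lemma tele_aux (ν : ℝ) (Δ : ℕ → ℝ) (i : ℕ) :
    ν ^ i * Δ 0 + (1 - ν) * ∑ k ∈ range i, ν ^ (i - (k + 1)) * Δ (k + 1)
      = Δ i + ∑ j ∈ range i, ν ^ (i - j) * (Δ j - Δ (j + 1)) := by
  induction i with
  | zero => simp
  | succ i ih =>
    have h1 : ∑ k ∈ range (i + 1), ν ^ (i + 1 - (k + 1)) * Δ (k + 1)
        = ν * ∑ k ∈ range i, ν ^ (i - (k + 1)) * Δ (k + 1) + Δ (i + 1) := by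
      rw [Finset.sum_range_succ, Finset.mul_sum]
      congr 1
      · refine Finset.sum_congr rfl fun k hk => ?_
        have hk' : k < i := Finset.mem_range.1 hk
        rw [show i + 1 - (k + 1) = (i - (k + 1)) + 1 by omega, pow_succ]
        ring
      · simp
    have h2 : ∑ j ∈ range (i + 1), ν ^ (i + 1 - j) * (Δ j - Δ (j + 1))
        = ν * ∑ j ∈ range i, ν ^ (i - j) * (Δ j - Δ (j + 1)) + ν * (Δ i - Δ (i + 1)) := by
      rw [Finset.sum_range_succ, Finset.mul_sum]
      congr 1
      · refine Finset.sum_congr rfl fun j hj => ?_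
        have hj' : j < i := Finset.mem_range.1 hj
        rw [show i + 1 - j = (i - j) + 1 by omega, pow_succ]
        ring
      · rw [show i + 1 - i = 1 by omega, pow_one]
    rw [h1, h2]
    linear_combination ν * ih

lemma row_mid (K : ℕ) (μ ν : ℝ) (Δ : ℕ → ℝ) (i : ℕ) (hi : i + 1 < K) :
    ∑ j ∈ range K, tAux K μ ν i j * Δ j
      = μ * Δ (i + 1) + (1 - μ) * (Δ i + ∑ j ∈ range i, ν ^ (i - j) * (Δ j - Δ (j + 1))) := by
  have hzero : ∀ j ∈ range K, j ∉ range (i + 2) → tAux K μ ν i j * Δ j = 0 := by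
    intro j hj hj'
    have h1 : i + 1 < j := by
      simp only [Finset.mem_range] at hj hj'; omega
    simp only [tAux]
    rw [if_pos hi, if_neg (by omega), if_neg (by omega), if_neg (by omega), zero_mul]
  rw [← Finset.sum_subset (Finset.range_subset_range.2 (by omega : i + 2 ≤ K)) hzero]
  rw [Finset.sum_range_succ]
  have etop : tAux K μ ν i (i + 1) = μ := by
    simp only [tAux]; rw [if_pos hi]; simp
  have e0 : tAux K μ ν i 0 = (1 - μ) * ν ^ i := by
    simp only [tAux]
    rw [if_pos hi, if_neg (by omega), if_neg (by omega)]; simp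
  have hrow1 : ∑ j ∈ range (i + 1), tAux K μ ν i j * Δ j
      = (1 - μ) * (ν ^ i * Δ 0 + (1 - ν) * ∑ k ∈ range i, ν ^ (i - (k + 1)) * Δ (k + 1)) := by
    rw [Finset.sum_range_succ']
    have ek : ∀ k ∈ range i, tAux K μ ν i (k + 1) * Δ (k + 1)
        = (1 - μ) * (1 - ν) * (ν ^ (i - (k + 1)) * Δ (k + 1)) := by
      intro k hk
      have hk' : k < i := Finset.mem_range.1 hk
      have h : tAux K μ ν i (k + 1) = (1 - μ) * (1 - ν) * ν ^ (i - (k + 1)) := by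
        simp only [tAux]
        rw [if_pos hi, if_neg (by omega), if_pos (by omega)]
      rw [h]; ring
    rw [Finset.sum_congr rfl ek, ← Finset.mul_sum, e0]
    ring
  rw [hrow1, etop, tele_aux]
  ring

lemma row_last (K : ℕ) (μ ν : ℝ) (Δ : ℕ → ℝ) (hK : 2 ≤ K) :
    ∑ j ∈ range K, tAux K μ ν (K - 1) j * Δ j
      = Δ (K - 1) + ∑ j ∈ range (K - 1), ν ^ (K - 1 - j) * (Δ j - Δ (j + 1)) := by
  have hni : ¬(K - 1 + 1 < K) := by omega
  rw [show range K = range (K - 1 + 1) by congr 1; omega]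
  rw [Finset.sum_range_succ']
  have e0 : tAux K μ ν (K - 1) 0 = ν ^ (K - 1) := by
    simp only [tAux]; rw [if_neg hni]; simp
  have ek : ∀ k ∈ range (K - 1), tAux K μ ν (K - 1) (k + 1) * Δ (k + 1)
      = (1 - ν) * (ν ^ (K - 1 - (k + 1)) * Δ (k + 1)) := by
    intro k hk
    have h : tAux K μ ν (K - 1) (k + 1) = (1 - ν) * ν ^ (K - 1 - (k + 1)) := by
      simp only [tAux]
      rw [if_neg hni, if_neg (by omega)]
    rw [h]; ring
  rw [Finset.sum_congr rfl ek, ← Finset.mul_sum, e0, ← tele_aux]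
  ring

lemma dot_aux {K : ℕ} (v w : Fin K → ℝ) (M : Matrix (Fin K) (Fin K) ℝ) :
    dotProduct (Matrix.vecMul v (M - 1)) w
      = ∑ i : Fin K, v i * ((∑ j : Fin K, M i j * w j) - w i) := by
  simp only [dotProduct, Matrix.vecMul, Matrix.sub_apply, Matrix.one_apply,
    Finset.sum_mul]
  rw [Finset.sum_comm]
  refine Finset.sum_congr rfl fun i _ => ?_
  simp only [mul_sub, sub_mul, ite_mul, mul_ite, one_mul, zero_mul, mul_one, mul_zero,
    Finset.sum_sub_distrib, Finset.sum_ite_eq, Finset.mem_univ, if_true, Finset.mul_sum]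
  congr 1
  exact Finset.sum_congr rfl fun j _ => by ring

end RtlAux

open RtlAux Finset

/-- Main theorem: if `μ < (π_{i+1}/π_i)·ν` for all `1 ≤ i ≤ K−1`, then the expected-MRR
gain `G = π·(T − I)·Δᵀ` of one RTL pass is strictly positive. -/
theorem rtl_gain_pos (K : ℕ) (hK : 2 ≤ K) (μ ν : ℝ)
    (hμ : μ ∈ Set.Ioo (0:ℝ) 1) (hν : ν ∈ Set.Ioo (0:ℝ) 1)
    (π : Fin K → ℝ) (hpos : ∀ i, 0 < π i) (hsum : ∑ i, π i = 1)
    (hcond : ∀ i : Fin K, (h : i.val + 1 < K) → μ < (π ⟨i.val + 1, h⟩ / π i) * ν) :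
    0 < dotProduct (Matrix.vecMul π (rtlT K μ ν - 1)) (mrr K) := by
  obtain ⟨hμ0, hμ1⟩ := hμ
  obtain ⟨hν0, hν1⟩ := hν
  set p : ℕ → ℝ := fun n => if h : n < K then π ⟨n, h⟩ else 0 with hp
  have hppos : ∀ n, n < K → 0 < p n := by
    intro n hn; simp only [hp, dif_pos hn]; exact hpos _
  have hpi : ∀ i : Fin K, p i.val = π i := by
    intro i; simp [hp, i.isLt]
  -- adjacent-step condition in `p` form
  have hstep : ∀ n, n + 1 < K → μ * p n < ν * p (n + 1) := by
    intro n hn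
    have hn' : n < K := by omega
    have h := hcond ⟨n, hn'⟩ hn
    have hπn : 0 < π ⟨n, hn'⟩ := hpos _
    rw [div_mul_eq_mul_div, lt_div_iff₀ hπn] at h
    simp only [hp, dif_pos hn, dif_pos hn']
    calc μ * π ⟨n, hn'⟩ < π ⟨n + 1, hn⟩ * ν := h
      _ = ν * π ⟨n + 1, hn⟩ := mul_comm _ _
  -- chained condition
  have chain : ∀ j i, j < i → i < K → p j * μ ^ (i - j) < p i * ν ^ (i - j) := by
    intro j i hji
    induction i, hji using Nat.le_induction with
    | base =>
      intro hK'
      rw [show j + 1 - j = 1 by omega, pow_one, pow_one]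
      have := hstep j hK'
      linarith
    | succ i hji ih =>
      intro hK'
      have h1 := ih (by omega)
      have h2 := hstep i hK'
      rw [show i + 1 - j = (i - j) + 1 by omega, pow_succ, pow_succ]
      calc p j * (μ ^ (i - j) * μ) = (p j * μ ^ (i - j)) * μ := by ring
        _ < (p i * ν ^ (i - j)) * μ := mul_lt_mul_of_pos_right h1 hμ0
        _ = (μ * p i) * ν ^ (i - j) := by ring
        _ < (ν * p (i + 1)) * ν ^ (i - j) := mul_lt_mul_of_pos_right h2 (pow_pos hν0 _)
        _ = p (i + 1) * (ν ^ (i - j) * ν) := by ring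
  have hdpos : ∀ n : ℕ, 0 < dAux n - dAux (n + 1) := by
    intro n
    have h1 : (0:ℝ) < (n:ℝ) + 1 := by positivity
    have h2 : ((n:ℝ) + 1) < ((n + 1 : ℕ) : ℝ) + 1 := by push_cast; linarith
    have := one_div_lt_one_div_of_lt h1 h2
    simp only [dAux]; linarith
  -- rewrite the gain as a nat-indexed sum
  have hG : dotProduct (Matrix.vecMul π (rtlT K μ ν - 1)) (mrr K)
      = ∑ i ∈ range K, p i * ((∑ j ∈ range K, tAux K μ ν i j * dAux j) - dAux i) := by
    rw [dot_aux]
    rw [← Fin.sum_univ_eq_sum_range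
      (fun n => p n * ((∑ j ∈ range K, tAux K μ ν n j * dAux j) - dAux n))]
    refine Finset.sum_congr rfl fun i _ => ?_
    rw [hpi i]
    rw [← Fin.sum_univ_eq_sum_range (fun j => tAux K μ ν i.val j * dAux j)]
    rfl
  -- per-row values
  have hrows : ∑ i ∈ range K, p i * ((∑ j ∈ range K, tAux K μ ν i j * dAux j) - dAux i)
      = (∑ i ∈ range (K - 1), p i * (μ * (dAux (i + 1) - dAux i)
            + (1 - μ) * ∑ j ∈ range i, ν ^ (i - j) * (dAux j - dAux (j + 1))))
        + p (K - 1) * ∑ j ∈ range (K - 1), ν ^ (K - 1 - j) * (dAux j - dAux (j + 1)) := by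
    rw [show range K = range (K - 1 + 1) by congr 1; omega, Finset.sum_range_succ]
    congr 1
    · refine Finset.sum_congr rfl fun i hi => ?_
      have hi' : i + 1 < K := by have := Finset.mem_range.1 hi; omega
      rw [show range (K - 1 + 1) = range K by congr 1; omega, row_mid K μ ν dAux i hi']
      ring
    · rw [show range (K - 1 + 1) = range K by congr 1; omega, row_last K μ ν dAux hK]
      ring
  -- swap the triangular double sum
  have hswap : ∑ i ∈ range (K - 1),
        p i * ((1 - μ) * ∑ j ∈ range i, ν ^ (i - j) * (dAux j - dAux (j + 1)))
      = ∑ j ∈ range (K - 1), ∑ i ∈ Ico (j + 1) (K - 1),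
          p i * ((1 - μ) * (ν ^ (i - j) * (dAux j - dAux (j + 1)))) := by
    rw [← tri_aux]
    refine Finset.sum_congr rfl fun i _ => ?_
    rw [Finset.mul_sum, Finset.mul_sum]
  -- collect everything as a sum over gaps
  have hfinal : ∑ i ∈ range K, p i * ((∑ j ∈ range K, tAux K μ ν i j * dAux j) - dAux i)
      = ∑ j ∈ range (K - 1), (dAux j - dAux (j + 1)) *
          ((1 - μ) * (∑ i ∈ Ico (j + 1) (K - 1), p i * ν ^ (i - j))
            + p (K - 1) * ν ^ (K - 1 - j) - μ * p j) := by
    rw [hrows]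
    simp only [mul_add]
    rw [Finset.sum_add_distrib, hswap, Finset.mul_sum]
    rw [← Finset.sum_add_distrib, ← Finset.sum_add_distrib]
    refine Finset.sum_congr rfl fun j hj => ?_
    have e : ∑ i ∈ Ico (j + 1) (K - 1), p i * ((1 - μ) * (ν ^ (i - j) * (dAux j - dAux (j + 1))))
        = (∑ i ∈ Ico (j + 1) (K - 1), p i * ν ^ (i - j)) * ((1 - μ) * (dAux j - dAux (j + 1))) := by
      rw [Finset.sum_mul]
      exact Finset.sum_congr rfl fun i _ => by ring
    rw [e]; ring
  rw [hG, hfinal]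
  apply Finset.sum_pos
  · intro j hj
    have hj' : j < K - 1 := Finset.mem_range.1 hj
    have hj2 : j < K := by omega
    apply mul_pos (hdpos j)
    -- positivity of the bracket
    have h2 : p j * μ ^ (K - 1 - j) < p (K - 1) * ν ^ (K - 1 - j) :=
      chain j (K - 1) (by omega) (by omega)
    have h1 : ∑ i ∈ Ico (j + 1) (K - 1), p j * μ ^ (i - j)
        ≤ ∑ i ∈ Ico (j + 1) (K - 1), p i * ν ^ (i - j) := by
      refine Finset.sum_le_sum fun i hi => ?_
      obtain ⟨hi1, hi2⟩ := Finset.mem_Ico.1 hi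
      exact le_of_lt (chain j i (by omega) (by omega))
    have hgeom : ∑ i ∈ Ico (j + 1) (K - 1), p j * μ ^ (i - j)
        = p j * ∑ k ∈ range (K - 2 - j), μ ^ (k + 1) := by
      rw [Finset.sum_Ico_eq_sum_range, Finset.mul_sum]
      refine Finset.sum_congr (by congr 1; omega) fun k hk => ?_
      rw [show j + 1 + k - j = k + 1 by omega]
    have hgeo := geo_aux μ (K - 2 - j)
    rw [show K - 2 - j + 1 = K - 1 - j by omega] at hgeo
    have h1' : (1 - μ) * (p j * ∑ k ∈ range (K - 2 - j), μ ^ (k + 1))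
        ≤ (1 - μ) * ∑ i ∈ Ico (j + 1) (K - 1), p i * ν ^ (i - j) := by
      rw [← hgeom]
      exact mul_le_mul_of_nonneg_left h1 (by linarith)
    have e2 : (1 - μ) * (p j * ∑ k ∈ range (K - 2 - j), μ ^ (k + 1))
        = μ * p j - p j * μ ^ (K - 1 - j) := by
      rw [show (1 - μ) * (p j * ∑ k ∈ range (K - 2 - j), μ ^ (k + 1))
        = p j * ((1 - μ) * ∑ k ∈ range (K - 2 - j), μ ^ (k + 1)) by ring, hgeo]
      ring
    linarith
  · exact ⟨0, Finset.mem_range.2 (by omega)⟩
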